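/- Let 1 ≤ m₀ ≤ m and 1 ≤ n₀ ≤ n. Let M be an existentially closed K_{m,n}-free incidence structure, let c_1,…,c_{m−m₀} be pairwise distinct points of M and d_1,…,d_{n−n₀} pairwise distinct lines of M such that every c_i is incident to every d_j. Let M₀ be the incidence structure whose points are the points of M not among the c_i that are incident to every d_j, whose lines are the lines of M not among the d_j that are incident to every c_i, and whose incidence relation is induced from M. Then M₀ is an existentially closed K_{m₀,n₀}-free incidence structure. -/

import Mathlib

open FirstOrder FirstOrder.Language

universe u v

/-- Relation symbols of the language of incidence structures: two unary symbols
(`pt` for "point", `lin` for "line") and one binary symbol (`inc` for "incidence"). -/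
inductive IncRel : ℕ → Type
  | pt : IncRel 1
  | lin : IncRel 1
  | inc : IncRel 2

/-- The first-order language `{P, L, I}` of incidence structures. -/
def IncLang : FirstOrder.Language := ⟨fun _ => Empty, IncRel⟩

section
variable {M : Type u} [IncLang.Structure M]

/-- `x` is a point. -/
def ptL (x : M) : Prop := Structure.RelMap (L := IncLang) IncRel.pt ![x]

/-- `x` is a line. -/
def lnL (x : M) : Prop := Structure.RelMap (L := IncLang) IncRel.lin ![x]

/-- `x` is incident to `y`. -/
def incL (x y : M) : Prop := Structure.RelMap (L := IncLang) IncRel.inc ![x, y]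

end

/-- `M` is an incidence structure: points and lines partition the domain, and
incidence only holds between a point and a line. -/
def IsIncidenceL (M : Type u) [IncLang.Structure M] : Prop :=
  (∀ x : M, ptL x ∨ lnL x) ∧ (∀ x : M, ¬(ptL x ∧ lnL x)) ∧
    ∀ x y : M, incL x y → ptL x ∧ lnL y

/-- `M` is `K_{m,n}`-free: there are no `m` pairwise distinct points and `n` pairwise
distinct lines with every one of the points incident to every one of the lines. -/
def KFreeL (m n : ℕ) (M : Type u) [IncLang.Structure M] : Prop :=
  ¬∃ (a : Fin m → M) (b : Fin n → M),
      Function.Injective a ∧ Function.Injective b ∧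
      (∀ i, ptL (a i)) ∧ (∀ j, lnL (b j)) ∧ ∀ i j, incL (a i) (b j)

/-- `M` is an existentially closed `K_{m,n}`-free incidence structure: `M` is a
`K_{m,n}`-free incidence structure, and for every `K_{m,n}`-free incidence structure
`N` containing `M` as an induced substructure (i.e. admitting an embedding of `M`),
every existential formula `∃ ȳ φ(ā, ȳ)` (with `φ` quantifier-free and parameters `ā`
from `M`) that holds in `N` also holds in `M`. -/
def IsECL (m n : ℕ) (M : Type u) [IncLang.Structure M] : Prop :=
  IsIncidenceL M ∧ KFreeL m n M ∧
    ∀ (N : Type u) [IncLang.Structure N], IsIncidenceL N → KFreeL m n N →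
      ∀ (f : M ↪[IncLang] N) (k : ℕ) (φ : IncLang.BoundedFormula M k), φ.IsQF →
        (∃ xs : Fin k → N, φ.Realize (f : M → N) xs) →
          ∃ xs : Fin k → M, φ.Realize (id : M → M) xs

/-- The induced structure on a subset of an `IncLang`-structure (the language has no
function symbols, so every subset is closed). -/
instance subStructure {M : Type u} [IncLang.Structure M] (p : M → Prop) :
    IncLang.Structure (Subtype p) where
  funMap := fun {_} f _ => Empty.elim f
  RelMap := fun {_} r xs => Structure.RelMap (M := M) r (fun i => (xs i : M))

/-- Let `1 ≤ m₀ ≤ m`, `1 ≤ n₀ ≤ n`, let `M` be an existentially closed `K_{m,n}`-free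
incidence structure, `c₁, …, c_{m-m₀}` pairwise distinct points and `d₁, …, d_{n-n₀}`
pairwise distinct lines with every `cᵢ` incident to every `dⱼ`.  Then the induced
structure `M₀`, on the points of `M` not among the `cᵢ` incident to every `dⱼ` together
with the lines of `M` not among the `dⱼ` incident to every `cᵢ`, is an existentially
closed `K_{m₀,n₀}`-free incidence structure. -/

-- ===== auxiliary infrastructure =====

-- aux
def mkS {S : Type u} (P Lp : S → Prop) (I : S → S → Prop) : IncLang.Structure S where
  funMap := fun {_} f _ => Empty.elim f
  RelMap := fun {l} r xs =>
    match l, r, xs with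
    | _, IncRel.pt, xs => P (xs 0)
    | _, IncRel.lin, xs => Lp (xs 0)
    | _, IncRel.inc, xs => I (xs 0) (xs 1)

theorem mkS_pt {S : Type u} (P Lp : S → Prop) (I : S → S → Prop) (x : S) :
    (@ptL S (mkS P Lp I) x) ↔ P x := Iff.rfl

theorem mkS_ln {S : Type u} (P Lp : S → Prop) (I : S → S → Prop) (x : S) :
    (@lnL S (mkS P Lp I) x) ↔ Lp x := Iff.rfl

theorem mkS_inc {S : Type u} (P Lp : S → Prop) (I : S → S → Prop) (x y : S) :
    (@incL S (mkS P Lp I) x y) ↔ I x y := Iff.rfl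

theorem sub_pt {M : Type u} [IncLang.Structure M] {p : M → Prop} (x : Subtype p) :
    ptL x ↔ ptL (x : M) := by
  show (Structure.RelMap (L := IncLang) (M := M) IncRel.pt
    fun i => ((![x] : Fin 1 → Subtype p) i : M)) ↔ ptL (x : M)
  rw [show (fun i => ((![x] : Fin 1 → Subtype p) i : M)) = ![(x : M)] by
    funext i; fin_cases i; rfl]
  exact Iff.rfl

theorem sub_ln {M : Type u} [IncLang.Structure M] {p : M → Prop} (x : Subtype p) :
    lnL x ↔ lnL (x : M) := by
  show (Structure.RelMap (L := IncLang) (M := M) IncRel.lin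
    fun i => ((![x] : Fin 1 → Subtype p) i : M)) ↔ lnL (x : M)
  rw [show (fun i => ((![x] : Fin 1 → Subtype p) i : M)) = ![(x : M)] by
    funext i; fin_cases i; rfl]
  exact Iff.rfl

theorem sub_inc {M : Type u} [IncLang.Structure M] {p : M → Prop} (x y : Subtype p) :
    incL x y ↔ incL (x : M) (y : M) := by
  show (Structure.RelMap (L := IncLang) (M := M) IncRel.inc
    fun i => ((![x, y] : Fin 2 → Subtype p) i : M)) ↔ incL (x : M) (y : M)
  rw [show (fun i => ((![x, y] : Fin 2 → Subtype p) i : M)) = ![(x : M), (y : M)] by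
    funext i; fin_cases i <;> rfl]
  exact Iff.rfl

def mkEmb {A : Type u} {B : Type v} [IncLang.Structure A] [IncLang.Structure B] (F : A → B)
    (hinj : Function.Injective F)
    (hpt : ∀ x, ptL (F x) ↔ ptL x) (hlin : ∀ x, lnL (F x) ↔ lnL x)
    (hinc : ∀ x y, incL (F x) (F y) ↔ incL x y) : A ↪[IncLang] B where
  toFun := F
  inj' := hinj
  map_fun' := fun {_} f _ => Empty.elim f
  map_rel' := by
    intro l r xs
    match l, r with
    | _, IncRel.pt =>
      rw [show xs = ![xs 0] by funext i; fin_cases i; rfl]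
      rw [show (F ∘ ![xs 0]) = ![F (xs 0)] by funext i; fin_cases i; rfl]
      exact hpt (xs 0)
    | _, IncRel.lin =>
      rw [show xs = ![xs 0] by funext i; fin_cases i; rfl]
      rw [show (F ∘ ![xs 0]) = ![F (xs 0)] by funext i; fin_cases i; rfl]
      exact hlin (xs 0)
    | _, IncRel.inc =>
      rw [show xs = ![xs 0, xs 1] by funext i; fin_cases i <;> rfl]
      rw [show (F ∘ ![xs 0, xs 1]) = ![F (xs 0), F (xs 1)] by funext i; fin_cases i <;> rfl]
      exact hinc (xs 0) (xs 1)

theorem emb_pt {A : Type u} {B : Type v} [IncLang.Structure A] [IncLang.Structure B]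
    (F : A ↪[IncLang] B) (x : A) : ptL (F x) ↔ ptL x := by
  have h := F.map_rel' (r := IncRel.pt) ![x]
  rwa [show (F.toFun ∘ ![x]) = ![F x] by funext i; fin_cases i; rfl] at h

theorem emb_ln {A : Type u} {B : Type v} [IncLang.Structure A] [IncLang.Structure B]
    (F : A ↪[IncLang] B) (x : A) : lnL (F x) ↔ lnL x := by
  have h := F.map_rel' (r := IncRel.lin) ![x]
  rwa [show (F.toFun ∘ ![x]) = ![F x] by funext i; fin_cases i; rfl] at h

theorem emb_inc {A : Type u} {B : Type v} [IncLang.Structure A] [IncLang.Structure B]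
    (F : A ↪[IncLang] B) (x y : A) : incL (F x) (F y) ↔ incL x y := by
  have h := F.map_rel' (r := IncRel.inc) ![x, y]
  rwa [show (F.toFun ∘ ![x, y]) = ![F x, F y] by funext i; fin_cases i <;> rfl] at h
section Formulas
variable {α : Type u} {k : ℕ}

def ptF (t : IncLang.Term (α ⊕ Fin k)) : IncLang.BoundedFormula α k :=
  Relations.boundedFormula₁ (IncRel.pt : IncLang.Relations 1) t

def lnF (t : IncLang.Term (α ⊕ Fin k)) : IncLang.BoundedFormula α k :=
  Relations.boundedFormula₁ (IncRel.lin : IncLang.Relations 1) t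

def incF (t₁ t₂ : IncLang.Term (α ⊕ Fin k)) : IncLang.BoundedFormula α k :=
  Relations.boundedFormula₂ (IncRel.inc : IncLang.Relations 2) t₁ t₂

def neF (t₁ t₂ : IncLang.Term (α ⊕ Fin k)) : IncLang.BoundedFormula α k :=
  (t₁.bdEqual t₂).not

variable {T : Type u} [IncLang.Structure T] {v : α → T} {xs : Fin k → T}

theorem realize_ptF {t : IncLang.Term (α ⊕ Fin k)} :
    (ptF t).Realize v xs ↔ ptL (t.realize (Sum.elim v xs)) :=
  BoundedFormula.realize_rel₁

theorem realize_lnF {t : IncLang.Term (α ⊕ Fin k)} :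
    (lnF t).Realize v xs ↔ lnL (t.realize (Sum.elim v xs)) :=
  BoundedFormula.realize_rel₁

theorem realize_incF {t₁ t₂ : IncLang.Term (α ⊕ Fin k)} :
    (incF t₁ t₂).Realize v xs ↔
      incL (t₁.realize (Sum.elim v xs)) (t₂.realize (Sum.elim v xs)) :=
  BoundedFormula.realize_rel₂

theorem realize_neF {t₁ t₂ : IncLang.Term (α ⊕ Fin k)} :
    (neF t₁ t₂).Realize v xs ↔
      t₁.realize (Sum.elim v xs) ≠ t₂.realize (Sum.elim v xs) := by
  rw [neF, BoundedFormula.realize_not, BoundedFormula.realize_bdEqual]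

theorem isQF_ptF {t : IncLang.Term (α ⊕ Fin k)} : (ptF t).IsQF :=
  (BoundedFormula.IsAtomic.rel _ _).isQF

theorem isQF_lnF {t : IncLang.Term (α ⊕ Fin k)} : (lnF t).IsQF :=
  (BoundedFormula.IsAtomic.rel _ _).isQF

theorem isQF_incF {t₁ t₂ : IncLang.Term (α ⊕ Fin k)} : (incF t₁ t₂).IsQF :=
  (BoundedFormula.IsAtomic.rel _ _).isQF

theorem isQF_neF {t₁ t₂ : IncLang.Term (α ⊕ Fin k)} : (neF t₁ t₂).IsQF :=
  (BoundedFormula.IsAtomic.equal t₁ t₂).isQF.not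

theorem isQF_foldr_inf (l : List (IncLang.BoundedFormula α k)) (h : ∀ φ ∈ l, φ.IsQF) :
    (l.foldr (· ⊓ ·) ⊤).IsQF := by
  induction l with
  | nil => exact BoundedFormula.IsQF.top
  | cons a l ih =>
      exact (h a (List.mem_cons_self)).inf (ih fun φ hφ => h φ (List.mem_cons_of_mem a hφ))

end Formulas

section Counting

theorem count_tuple {X : Type*} {mm r k : ℕ} (a : Fin mm → X) (ha : Function.Injective a)
    (P : Fin mm → Prop) (c : Fin r → X)
    (hP : ∀ i, ¬P i → ∃ j, a i = c j) (hk : k + r ≤ mm) :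
    ∃ e : Fin k → Fin mm, Function.Injective e ∧ ∀ i, P (e i) := by
  classical
  set s : Finset (Fin mm) := Finset.univ.filter P with hs
  have hcompl : (Finset.univ.filter fun i => ¬P i).card ≤ r := by
    have : ∀ i ∈ Finset.univ.filter fun i => ¬P i, ∃ j, a i = c j := by
      intro i hi
      exact hP i (Finset.mem_filter.mp hi).2
    choose F hF using this
    rcases Finset.eq_empty_or_nonempty (Finset.univ.filter fun i => ¬P i) with he | ⟨i₀, hi₀⟩
    · simp [he]
    · obtain ⟨j₀, -⟩ := hP i₀ (Finset.mem_filter.mp hi₀).2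
      have : (Finset.univ.filter fun i => ¬P i).card ≤ (Finset.univ : Finset (Fin r)).card := by
        apply Finset.card_le_card_of_injOn
          (fun i => if h : i ∈ Finset.univ.filter fun i => ¬P i then F i h else j₀)
          (fun _ _ => Finset.mem_univ _)
        intro i hi i' hi' h
        have hi2 := Finset.mem_coe.mp hi
        have hi2' := Finset.mem_coe.mp hi'
        simp only [] at h
        rw [dif_pos hi2, dif_pos hi2'] at h
        exact ha (by rw [hF i hi2, hF i' hi2', h])
      simpa using this
  have hcard : k ≤ s.card := by
    have := Finset.card_filter_add_card_filter_not (s := Finset.univ) (p := P)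
    simp only [Finset.card_univ, Fintype.card_fin] at this
    rw [hs]
    omega
  obtain ⟨t, hts, htc⟩ := Finset.exists_subset_card_eq hcard
  refine ⟨fun i => t.orderEmbOfFin htc i, fun i j h => ?_, fun i => ?_⟩
  · exact (t.orderEmbOfFin htc).injective h
  · have := Finset.orderEmbOfFin_mem t htc i
    exact (Finset.mem_filter.mp (hts this)).2

theorem cover_tuple {X : Type*} {nn : ℕ} (b : Fin nn → X) (hb : Function.Injective b)
    (T : Finset X) (hsub : ∀ j, b j ∈ T) (hcard : T.card ≤ nn) :
    ∀ x ∈ T, ∃ j, b j = x := by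
  classical
  have himg : Finset.univ.image b ⊆ T := by
    intro x hx
    obtain ⟨j, _, rfl⟩ := Finset.mem_image.mp hx
    exact hsub j
  have hcard' : T.card ≤ (Finset.univ.image b).card := by
    rw [Finset.card_image_of_injective _ hb]
    simpa using hcard
  have := Finset.eq_of_subset_of_card_le himg hcard'
  intro x hx
  rw [← this] at hx
  obtain ⟨j, _, rfl⟩ := Finset.mem_image.mp hx
  exact ⟨j, rfl⟩

theorem extract_inl {k : ℕ} {A B : Type*} (a : Fin k → A ⊕ B)
    (h : ∀ i, ∃ x, a i = Sum.inl x) : ∃ w : Fin k → A, ∀ i, a i = Sum.inl (w i) :=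
  ⟨fun i => (h i).choose, fun i => (h i).choose_spec⟩

theorem snoc_tuple {X : Type*} {k : ℕ} (z : Fin k → X) (hz : Function.Injective z) (x : X)
    (hx : ∀ i, x ≠ z i) :
    ∃ w : Fin (k + 1) → X, Function.Injective w ∧ (∀ i : Fin k, w i.castSucc = z i)
      ∧ w (Fin.last k) = x := by
  refine ⟨Fin.snoc z x, ?_, fun i => Fin.snoc_castSucc .., Fin.snoc_last ..⟩
  intro i j hij
  rcases Fin.eq_castSucc_or_eq_last i with ⟨i', rfl⟩ | rfl <;>
    rcases Fin.eq_castSucc_or_eq_last j with ⟨j', rfl⟩ | rfl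
  · rw [Fin.snoc_castSucc, Fin.snoc_castSucc] at hij
    exact congrArg Fin.castSucc (hz hij)
  · rw [Fin.snoc_castSucc, Fin.snoc_last] at hij
    exact absurd hij.symm (hx i')
  · rw [Fin.snoc_castSucc, Fin.snoc_last] at hij
    exact absurd hij (hx j')
  · rfl

end Counting

section Relabel

theorem realize_relabel_inl {α β : Type u} {k : ℕ} (g' : α → β) (φ : IncLang.BoundedFormula α k)
    {T : Type v} [IncLang.Structure T] (v : β → T) (xs : Fin k → T) :
    ((φ.relabel (Sum.inl ∘ g' : α → β ⊕ Fin 0)).castLE (by omega : 0 + k ≤ k)).Realize v xs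
      ↔ φ.Realize (v ∘ g') xs := by
  rw [BoundedFormula.realize_castLE_of_eq (zero_add k), BoundedFormula.realize_relabel]
  have h2 : ((xs ∘ Fin.cast (zero_add k)) ∘ Fin.natAdd 0) = xs := by
    funext i
    simp only [Function.comp_apply]
    congr 1
    ext
    simp
  rw [h2]
  exact Iff.rfl

end Relabel

section RangeSplit
variable {A B S : Type*} (F : A → B)

theorem rangeSplit_pos [∀ y : B, Decidable (y ∈ Set.range F)] (hF : Function.Injective F)
    (u : A → S) (v : ∀ y : B, y ∉ Set.range F → S) (a : A) :
    (if hy : F a ∈ Set.range F then u hy.choose else v (F a) hy) = u a := by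
  split
  next h => exact congrArg u (hF h.choose_spec)
  next h => exact absurd ⟨a, rfl⟩ h

theorem rangeSplit_neg [∀ y : B, Decidable (y ∈ Set.range F)]
    (u : A → S) (v : ∀ y : B, y ∉ Set.range F → S) (y : B) (hy : y ∉ Set.range F) :
    (if hy' : y ∈ Set.range F then u hy'.choose else v y hy') = v y hy := by
  split
  next h => exact absurd h hy
  next h => rfl

end RangeSplit

theorem statement_10 (m₀ n₀ m n : ℕ) (hm₀ : 1 ≤ m₀) (hn₀ : 1 ≤ n₀)
    (hm : m₀ ≤ m) (hn : n₀ ≤ n) {M : Type u} [IncLang.Structure M]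
    (hM : IsECL m n M) (c : Fin (m - m₀) → M) (d : Fin (n - n₀) → M)
    (hc : Function.Injective c) (hd : Function.Injective d)
    (hcp : ∀ i, ptL (c i)) (hdl : ∀ j, lnL (d j))
    (hcd : ∀ i j, incL (c i) (d j)) :
    IsECL m₀ n₀ (Subtype fun x : M =>
      (ptL x ∧ (∀ i, x ≠ c i) ∧ ∀ j, incL x (d j)) ∨
      (lnL x ∧ (∀ j, x ≠ d j) ∧ ∀ i, incL (c i) x)) := by
  obtain ⟨hMinc, hMfree, hMec⟩ := hM
  set pred : M → Prop := fun x : M =>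
      (ptL x ∧ (∀ i, x ≠ c i) ∧ ∀ j, incL x (d j)) ∨
      (lnL x ∧ (∀ j, x ≠ d j) ∧ ∀ i, incL (c i) x) with hpreddef
  have hnotboth := hMinc.2.1
  have npc : ∀ x : M, pred x → ptL x → ((∀ i, x ≠ c i) ∧ ∀ j, incL x (d j)) := by
    intro x hx hpt
    rcases hx with ⟨_, h⟩ | ⟨hl, _⟩
    · exact h
    · exact absurd ⟨hpt, hl⟩ (hnotboth x)
  have nld : ∀ x : M, pred x → lnL x → ((∀ j, x ≠ d j) ∧ ∀ i, incL (c i) x) := by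
    intro x hx hl
    rcases hx with ⟨hpt, _⟩ | ⟨_, h⟩
    · exact absurd ⟨hpt, hl⟩ (hnotboth x)
    · exact h
  have hcnotd : ∀ i j, c i ≠ d j := by
    intro i j he
    exact hnotboth (c i) ⟨hcp i, he ▸ hdl j⟩
  refine ⟨⟨?_, ?_, ?_⟩, ?_, ?_⟩
  · -- incidence: partition
    intro x
    rw [sub_pt, sub_ln]
    rcases x.2 with ⟨h, _⟩ | ⟨h, _⟩
    · exact Or.inl h
    · exact Or.inr h
  · intro x
    rw [sub_pt, sub_ln]
    exact hnotboth _
  · intro x y h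
    rw [sub_inc] at h
    rw [sub_pt, sub_ln]
    exact hMinc.2.2 _ _ h
  · -- K-freeness of M₀
    rintro ⟨a, b, hainj, hbinj, hapt, hbln, hab⟩
    have hptv : ∀ i, ptL ((a i : M)) := fun i => (sub_pt (a i)).mp (hapt i)
    have hlnv : ∀ j, lnL ((b j : M)) := fun j => (sub_ln (b j)).mp (hbln j)
    have hanc : ∀ i jc, (a i : M) ≠ c jc := fun i => (npc _ (a i).2 (hptv i)).1
    have hand : ∀ i jd, incL (a i : M) (d jd) := fun i => (npc _ (a i).2 (hptv i)).2
    have hbnd : ∀ j jd, (b j : M) ≠ d jd := fun j => (nld _ (b j).2 (hlnv j)).1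
    have hbc : ∀ j ic, incL (c ic) (b j : M) := fun j ic => (nld _ (b j).2 (hlnv j)).2 ic
    apply hMfree
    refine ⟨fun i => if h : (i : ℕ) < m₀ then (a ⟨i, h⟩ : M) else c ⟨(i : ℕ) - m₀, by omega⟩,
      fun j => if h : (j : ℕ) < n₀ then (b ⟨j, h⟩ : M) else d ⟨(j : ℕ) - n₀, by omega⟩,
      ?_, ?_, ?_, ?_, ?_⟩
    · intro i j hij
      by_cases hi : (i : ℕ) < m₀ <;> by_cases hj : (j : ℕ) < m₀ <;>
        simp only [dif_pos, dif_neg, hi, hj] at hij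
      · have := hainj (Subtype.ext hij)
        rw [Fin.mk.injEq] at this
        exact Fin.ext this
      · exact absurd hij (hanc _ _)
      · exact absurd hij.symm (hanc _ _)
      · have := hc hij
        rw [Fin.mk.injEq] at this
        apply Fin.ext
        omega
    · intro i j hij
      by_cases hi : (i : ℕ) < n₀ <;> by_cases hj : (j : ℕ) < n₀ <;>
        simp only [dif_pos, dif_neg, hi, hj] at hij
      · have := hbinj (Subtype.ext hij)
        rw [Fin.mk.injEq] at this
        exact Fin.ext this
      · exact absurd hij (hbnd _ _)
      · exact absurd hij.symm (hbnd _ _)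
      · have := hd hij
        rw [Fin.mk.injEq] at this
        apply Fin.ext
        omega
    · intro i
      by_cases hi : (i : ℕ) < m₀ <;> simp only [dif_pos, dif_neg, hi]
      · exact hptv _
      · exact hcp _
    · intro j
      by_cases hj : (j : ℕ) < n₀ <;> simp only [dif_pos, dif_neg, hj]
      · exact hlnv _
      · exact hdl _
    · intro i j
      by_cases hi : (i : ℕ) < m₀ <;> by_cases hj : (j : ℕ) < n₀ <;>
        simp only [dif_pos, dif_neg, hi, hj]
      · exact (sub_inc _ _).mp (hab _ _)
      · exact hand _ _
      · exact hbc _ _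
      · exact hcd _ _
  · -- existential closure
    intro N' instN' hN'inc hN'free f k φ hφQF hex
    obtain ⟨xs0, hxs0⟩ := hex
    classical
    -- ===== the amalgam structure on M ⊕ (N' ∖ range f) =====
    letI SNN : IncLang.Structure (M ⊕ {y : N' // y ∉ Set.range f}) :=
      mkS (Sum.elim (fun x => ptL x) (fun y => ptL (y.1 : N')))
        (Sum.elim (fun x => lnL x) (fun y => lnL (y.1 : N')))
        (fun z w =>
          Sum.elim
            (fun x => Sum.elim (fun x' => incL x x')
              (fun y' => (∃ hx : pred x, incL (f ⟨x, hx⟩) y'.1) ∨ ((∃ i, x = c i) ∧ lnL y'.1)) w)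
            (fun y => Sum.elim
              (fun x' => (∃ hx' : pred x', incL y.1 (f ⟨x', hx'⟩)) ∨ ((∃ j, x' = d j) ∧ ptL y.1))
              (fun y' => incL y.1 y'.1) w) z)
    -- the embedding of M
    let g : M ↪[IncLang] (M ⊕ {y : N' // y ∉ Set.range f}) :=
      mkEmb Sum.inl (fun _ _ h => Sum.inl.inj h) (fun _ => Iff.rfl) (fun _ => Iff.rfl)
        (fun _ _ => Iff.rfl)
    have hgc : ∀ x : M, g x = Sum.inl x := fun _ => rfl
    -- the embedding of N'
    let hmap : N' → M ⊕ {y : N' // y ∉ Set.range f} := fun y =>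
      if hy : y ∈ Set.range f then Sum.inl (hy.choose : M) else Sum.inr ⟨y, hy⟩
    have hmap_f : ∀ z : Subtype pred, hmap (f z) = Sum.inl (z : M) := fun z =>
      rangeSplit_pos (F := ⇑f) f.injective
        (fun z' => (Sum.inl (z' : M) : M ⊕ {y : N' // y ∉ Set.range ⇑f}))
        (fun y hy => Sum.inr ⟨y, hy⟩) z
    have hmap_new : ∀ (y : N') (hy : y ∉ Set.range f), hmap y = Sum.inr ⟨y, hy⟩ := fun y hy =>
      rangeSplit_neg (F := ⇑f)
        (fun z' => (Sum.inl (z' : M) : M ⊕ {y : N' // y ∉ Set.range ⇑f}))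
        (fun y hy => Sum.inr ⟨y, hy⟩) y hy
    have predne_c : ∀ (z : Subtype pred) (i), (z : M) ≠ c i := by
      rintro ⟨zv, hz⟩ i heq
      rcases hz with ⟨_, hne, _⟩ | ⟨hl, _, _⟩
      · exact hne i heq
      · exact hnotboth (c i) ⟨hcp i, heq ▸ hl⟩
    have predne_d : ∀ (z : Subtype pred) (j), (z : M) ≠ d j := by
      rintro ⟨zv, hz⟩ j heq
      rcases hz with ⟨hp, _, _⟩ | ⟨_, hne, _⟩
      · exact hnotboth (d j) ⟨heq ▸ hp, hdl j⟩
      · exact hne j heq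
    have hmapinj : Function.Injective hmap := by
      intro y y' h
      by_cases h1 : y ∈ Set.range f <;> by_cases h2 : y' ∈ Set.range f
      · obtain ⟨z1, rfl⟩ := h1
        obtain ⟨z2, rfl⟩ := h2
        rw [hmap_f z1, hmap_f z2] at h
        exact congrArg f (Subtype.ext (Sum.inl.inj h))
      · obtain ⟨z1, rfl⟩ := h1
        rw [hmap_f z1, hmap_new y' h2] at h
        exact absurd h (fun hh => Sum.inl_ne_inr hh)
      · obtain ⟨z2, rfl⟩ := h2
        rw [hmap_new y h1, hmap_f z2] at h
        exact absurd h (fun hh => Sum.inr_ne_inl hh)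
      · rw [hmap_new y h1, hmap_new y' h2] at h
        exact congrArg Subtype.val (Sum.inr.inj h)
    let hEmb : N' ↪[IncLang] (M ⊕ {y : N' // y ∉ Set.range f}) := by
      refine mkEmb hmap hmapinj ?_ ?_ ?_
      · intro y
        by_cases h1 : y ∈ Set.range f
        · obtain ⟨z, rfl⟩ := h1
          rw [hmap_f z]
          exact ((sub_pt z).symm.trans (emb_pt f z).symm)
        · rw [hmap_new y h1]
          exact Iff.rfl
      · intro y
        by_cases h1 : y ∈ Set.range f
        · obtain ⟨z, rfl⟩ := h1
          rw [hmap_f z]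
          exact ((sub_ln z).symm.trans (emb_ln f z).symm)
        · rw [hmap_new y h1]
          exact Iff.rfl
      · intro y y'
        by_cases h1 : y ∈ Set.range f <;> by_cases h2 : y' ∈ Set.range f
        · obtain ⟨z1, rfl⟩ := h1
          obtain ⟨z2, rfl⟩ := h2
          rw [hmap_f z1, hmap_f z2]
          exact ((sub_inc z1 z2).symm.trans (emb_inc f z1 z2).symm)
        · obtain ⟨z1, rfl⟩ := h1
          rw [hmap_f z1, hmap_new y' h2]
          constructor
          · intro h
            have h' : (∃ hx : pred (z1 : M), incL (f ⟨(z1 : M), hx⟩) y') ∨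
                ((∃ i, (z1 : M) = c i) ∧ lnL y') := h
            rcases h' with ⟨hx, hi⟩ | ⟨⟨i, heq⟩, _⟩
            · exact hi
            · exact absurd heq (predne_c z1 i)
          · intro h
            exact Or.inl ⟨z1.2, h⟩
        · obtain ⟨z2, rfl⟩ := h2
          rw [hmap_new y h1, hmap_f z2]
          constructor
          · intro h
            have h' : (∃ hx' : pred (z2 : M), incL y (f ⟨(z2 : M), hx'⟩)) ∨
                ((∃ j, (z2 : M) = d j) ∧ ptL y) := h
            rcases h' with ⟨hx, hi⟩ | ⟨⟨j, heq⟩, _⟩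
            · exact hi
            · exact absurd heq (predne_d z2 j)
          · intro h
            exact Or.inl ⟨z2.2, h⟩
        · rw [hmap_new y h1, hmap_new y' h2]
          exact Iff.rfl
    have hEmbc : ∀ y : N', hEmb y = hmap y := fun _ => rfl
    have hEmb_f : ∀ z : Subtype pred, hEmb (f z) = Sum.inl (z : M) := hmap_f
    have hEmb_new : ∀ (y : N') (hy : y ∉ Set.range f), hEmb y = Sum.inr ⟨y, hy⟩ := hmap_new
    -- incidence axioms for the amalgam
    have hNNinc : IsIncidenceL (M ⊕ {y : N' // y ∉ Set.range f}) := by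
      refine ⟨?_, ?_, ?_⟩
      · intro z
        cases z with
        | inl x => exact hMinc.1 x
        | inr y => exact hN'inc.1 y.1
      · intro z
        cases z with
        | inl x => exact hnotboth x
        | inr y => exact hN'inc.2.1 y.1
      · intro z w h
        cases z with
        | inl x =>
          cases w with
          | inl x' => exact hMinc.2.2 x x' h
          | inr y' =>
            have h' : (∃ hx : pred x, incL (f ⟨x, hx⟩) y'.1) ∨
                ((∃ i, x = c i) ∧ lnL y'.1) := h
            rcases h' with ⟨hx, hi⟩ | ⟨⟨i, rfl⟩, hl⟩
            · have := hN'inc.2.2 _ _ hi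
              exact ⟨(sub_pt _).mp ((emb_pt f _).mp this.1), this.2⟩
            · exact ⟨hcp i, hl⟩
        | inr y =>
          cases w with
          | inl x' =>
            have h' : (∃ hx' : pred x', incL y.1 (f ⟨x', hx'⟩)) ∨
                ((∃ j, x' = d j) ∧ ptL y.1) := h
            rcases h' with ⟨hx, hi⟩ | ⟨⟨j, rfl⟩, hp⟩
            · have := hN'inc.2.2 _ _ hi
              exact ⟨this.1, (sub_ln _).mp ((emb_ln f _).mp this.2)⟩
            · exact ⟨hp, hdl j⟩
          | inr y' => exact hN'inc.2.2 y.1 y'.1 h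
    -- ===== key lemmas (via the e.c. property of M) =====
    have key_pt : ∀ ℓ : Fin n₀ → Subtype pred, Function.Injective ℓ →
        (∀ k', lnL ((ℓ k' : M))) → ∀ y : N', ptL y → y ∉ Set.range f →
        (∀ k', incL y (f (ℓ k'))) → False := by
      intro ℓ hℓi hℓl y hyp hynr hyinc
      have hℓv : Function.Injective fun k' => (ℓ k' : M) := fun i j h => hℓi (Subtype.ext h)
      have hℓd : ∀ k' j, (ℓ k' : M) ≠ d j := fun k' => (nld _ (ℓ k').2 (hℓl k')).1
      by_cases hbl : ∃ w : Fin (m - 1) → M, Function.Injective w ∧ ∀ i,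
          ptL (w i) ∧ (∀ k', incL (w i) (ℓ k' : M)) ∧ ∀ j, incL (w i) (d j)
      · obtain ⟨w, hwi, hw⟩ := hbl
        obtain ⟨e, hei, he⟩ := count_tuple (k := m₀ - 1) w hwi (fun i => pred (w i)) c
          (fun i hnp => by
            by_contra hno
            push_neg at hno
            exact hnp (Or.inl ⟨(hw i).1, hno, (hw i).2.2⟩)) (by omega)
        have hAp : ∀ i : Fin m₀, ∃ p : N',
            ((∃ hi : (i : ℕ) < m₀ - 1, p = f ⟨w (e ⟨i, hi⟩), he ⟨i, hi⟩⟩) ∨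
              (¬(i : ℕ) < m₀ - 1 ∧ p = y)) ∧ ptL p ∧ ∀ k', incL p (f (ℓ k')) := by
          intro i
          by_cases hi : (i : ℕ) < m₀ - 1
          · refine ⟨f ⟨w (e ⟨i, hi⟩), he ⟨i, hi⟩⟩, Or.inl ⟨hi, rfl⟩, ?_, ?_⟩
            · exact (emb_pt f _).mpr ((sub_pt _).mpr (hw (e ⟨i, hi⟩)).1)
            · intro k'
              exact (emb_inc f _ _).mpr ((sub_inc _ _).mpr ((hw (e ⟨i, hi⟩)).2.1 k'))
          · exact ⟨y, Or.inr ⟨hi, rfl⟩, hyp, hyinc⟩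
        choose A hA1 hA2 hA3 using hAp
        apply hN'free
        refine ⟨A, fun k' => f (ℓ k'), ?_, fun i j h => hℓi (f.injective h), hA2,
          fun k' => (emb_ln f _).mpr ((sub_ln _).mpr (hℓl k')), fun i k' => hA3 i k'⟩
        intro i j hij
        rcases hA1 i with ⟨hi, hpi⟩ | ⟨hi, hpi⟩ <;> rcases hA1 j with ⟨hj, hpj⟩ | ⟨hj, hpj⟩
        · rw [hpi, hpj] at hij
          have h6 := hei (hwi (congrArg Subtype.val (f.injective hij)))
          rw [Fin.mk.injEq] at h6
          exact Fin.ext h6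
        · rw [hpi, hpj] at hij
          exact absurd ⟨_, hij⟩ hynr
        · rw [hpi, hpj] at hij
          exact absurd ⟨_, hij.symm⟩ hynr
        · have h1 := i.isLt
          have h2 := j.isLt
          exact Fin.ext (by omega)
      · -- pump: arbitrarily many distinct pred points on the lines ℓ
        have pump : ∀ jz : ℕ, ∃ z : Fin jz → Subtype pred, Function.Injective z ∧
            ∀ i, ptL ((z i : M)) ∧ ∀ k', incL ((z i : M)) ((ℓ k' : M)) := by
          intro jz
          induction jz with
          | zero => exact ⟨Fin.elim0, fun i => i.elim0, fun i => i.elim0⟩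
          | succ jz ih =>
            obtain ⟨z, hzi, hz⟩ := ih
            letI SE : IncLang.Structure (M ⊕ PUnit.{u+1}) :=
              mkS (Sum.elim (fun x => ptL x) fun _ => True)
                (Sum.elim (fun x => lnL x) fun _ => False)
                (fun zz ww =>
                  Sum.elim (fun x => Sum.elim (fun x' => incL x x') (fun _ => False) ww)
                    (fun _ => Sum.elim (fun x' => (∃ k', x' = (ℓ k' : M)) ∨ ∃ j, x' = d j)
                      (fun _ => False) ww) zz)
            have hEinc : IsIncidenceL (M ⊕ PUnit.{u+1}) := by
              refine ⟨?_, ?_, ?_⟩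
              · intro zz
                cases zz with
                | inl x => exact hMinc.1 x
                | inr uu => exact Or.inl trivial
              · intro zz
                cases zz with
                | inl x => exact hnotboth x
                | inr uu => exact fun h => h.2
              · intro zz ww h
                cases zz with
                | inl x =>
                  cases ww with
                  | inl x' => exact hMinc.2.2 x x' h
                  | inr uu => exact absurd h (fun hh => hh)
                | inr uu =>
                  cases ww with
                  | inl x' =>
                    have h' : (∃ k', x' = (ℓ k' : M)) ∨ ∃ j, x' = d j := h
                    refine ⟨trivial, ?_⟩
                    rcases h' with ⟨k', rfl⟩ | ⟨j, rfl⟩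
                    · exact hℓl k'
                    · exact hdl j
                  | inr uu' => exact absurd h (fun hh => hh)
            have hEfree : KFreeL m n (M ⊕ PUnit.{u+1}) := by
              rintro ⟨aa, bb, hai, hbi, hap, hbl', hab'⟩
              have hbex : ∀ j, ∃ x, bb j = Sum.inl x := by
                intro j
                cases hbj : bb j with
                | inl x => exact ⟨x, rfl⟩
                | inr uu =>
                  have hthis := hbl' j
                  rw [hbj] at hthis
                  exact absurd hthis (fun hh => hh)
              obtain ⟨lb, hlb⟩ := extract_inl bb hbex
              have hlbi : Function.Injective lb := by
                intro i j h
                apply hbi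
                rw [hlb i, hlb j, h]
              by_cases hnew : ∃ i uu, aa i = Sum.inr uu
              · obtain ⟨i₀, uu₀, hi₀⟩ := hnew
                have hbT : ∀ j, (∃ k', lb j = (ℓ k' : M)) ∨ ∃ jd, lb j = d jd := by
                  intro j
                  have h := hab' i₀ j
                  rw [hi₀, hlb j] at h
                  exact h
                have hTcard : ((Finset.univ.image fun k' => ((ℓ k' : M))) ∪
                    Finset.univ.image d).card = n := by
                  rw [Finset.card_union_of_disjoint, Finset.card_image_of_injective _ hℓv,
                    Finset.card_image_of_injective _ hd, Finset.card_univ, Finset.card_univ]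
                  · simp only [Fintype.card_fin]
                    omega
                  · rw [Finset.disjoint_left]
                    rintro x hx hx'
                    obtain ⟨k', -, rfl⟩ := Finset.mem_image.mp hx
                    obtain ⟨jd, -, hjd⟩ := Finset.mem_image.mp hx'
                    exact hℓd k' jd hjd.symm
                have hcov := cover_tuple lb hlbi _ (fun j => by
                    rcases hbT j with ⟨k', h⟩ | ⟨jd, h⟩
                    · exact Finset.mem_union_left _
                        (Finset.mem_image.mpr ⟨k', Finset.mem_univ _, h.symm⟩)
                    · exact Finset.mem_union_right _
                        (Finset.mem_image.mpr ⟨jd, Finset.mem_univ _, h.symm⟩))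
                  (le_of_eq hTcard)
                obtain ⟨e2, he2i, he2⟩ := count_tuple (k := m - 1) aa hai (fun i => ∃ x, aa i = Sum.inl x)
                  (fun _ : Fin 1 => (Sum.inr PUnit.unit : M ⊕ PUnit.{u+1}))
                  (fun i hni => by
                    cases hai' : aa i with
                    | inl x => exact absurd ⟨x, hai'⟩ hni
                    | inr uu => exact ⟨0, rfl⟩)
                  (by omega)
                choose w hw using he2
                apply hbl
                refine ⟨w, fun i j h => he2i (hai (by rw [hw i, hw j, h])), ?_⟩
                intro i
                refine ⟨?_, ?_, ?_⟩
                · have hthis := hap (e2 i)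
                  rw [hw i] at hthis
                  exact hthis
                · intro k'
                  obtain ⟨j, hj⟩ := hcov ((ℓ k' : M)) (Finset.mem_union_left _
                    (Finset.mem_image.mpr ⟨k', Finset.mem_univ _, rfl⟩))
                  have h := hab' (e2 i) j
                  rw [hw i, hlb j, hj] at h
                  exact h
                · intro j'
                  obtain ⟨j, hj⟩ := hcov (d j') (Finset.mem_union_right _
                    (Finset.mem_image.mpr ⟨j', Finset.mem_univ _, rfl⟩))
                  have h := hab' (e2 i) j
                  rw [hw i, hlb j, hj] at h
                  exact h
              · push_neg at hnew
                have haex : ∀ i, ∃ x, aa i = Sum.inl x := by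
                  intro i
                  cases hai' : aa i with
                  | inl x => exact ⟨x, rfl⟩
                  | inr uu => exact absurd hai' (hnew i uu)
                obtain ⟨pa, hpa⟩ := extract_inl aa haex
                apply hMfree
                refine ⟨pa, lb, fun i j h => hai (by rw [hpa i, hpa j, h]), hlbi, ?_, ?_, ?_⟩
                · intro i
                  have hthis := hap i
                  rw [hpa i] at hthis
                  exact hthis
                · intro j
                  have hthis := hbl' j
                  rw [hlb j] at hthis
                  exact hthis
                · intro i j
                  have hthis := hab' i j
                  rw [hpa i, hlb j] at hthis
                  exact hthis
            obtain ⟨ws2, hws2⟩ := hMec _ hEinc hEfree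
              (mkEmb Sum.inl (fun _ _ h => Sum.inl.inj h) (fun _ => Iff.rfl) (fun _ => Iff.rfl)
                (fun _ _ => Iff.rfl)) 1
              (List.foldr (· ⊓ ·) ⊤
                ([ptF (Term.var (Sum.inr 0))]
                ++ ((List.finRange (m - m₀)).map fun i =>
                      neF (Term.var (Sum.inr 0)) (Term.var (Sum.inl (c i))))
                ++ ((List.finRange jz).map fun i =>
                      neF (Term.var (Sum.inr 0)) (Term.var (Sum.inl ((z i : M)))))
                ++ ((List.finRange n₀).map fun k' =>
                      incF (Term.var (Sum.inr 0)) (Term.var (Sum.inl ((ℓ k' : M)))))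
                ++ ((List.finRange (n - n₀)).map fun j =>
                      incF (Term.var (Sum.inr 0)) (Term.var (Sum.inl (d j))))))
              (isQF_foldr_inf _ (by
                intro φ'' hφ''
                rcases List.mem_append.mp hφ'' with h'' | h''
                · rcases List.mem_append.mp h'' with h''' | h'''
                  · rcases List.mem_append.mp h''' with h4 | h4
                    · rcases List.mem_append.mp h4 with h5 | h5
                      · rw [List.mem_singleton.mp h5]
                        exact isQF_ptF
                      · obtain ⟨_, -, rfl⟩ := List.mem_map.mp h5
                        exact isQF_neF
                    · obtain ⟨_, -, rfl⟩ := List.mem_map.mp h4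
                      exact isQF_neF
                  · obtain ⟨_, -, rfl⟩ := List.mem_map.mp h'''
                    exact isQF_incF
                · obtain ⟨_, -, rfl⟩ := List.mem_map.mp h''
                  exact isQF_incF))
              ⟨fun _ => Sum.inr PUnit.unit, by
                rw [BoundedFormula.realize_foldr_inf]
                intro φ'' hφ''
                rcases List.mem_append.mp hφ'' with h'' | h''
                · rcases List.mem_append.mp h'' with h''' | h'''
                  · rcases List.mem_append.mp h''' with h4 | h4
                    · rcases List.mem_append.mp h4 with h5 | h5
                      · rw [List.mem_singleton.mp h5, realize_ptF]
                        exact trivial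
                      · obtain ⟨i, -, rfl⟩ := List.mem_map.mp h5
                        rw [realize_neF]
                        exact fun hh => Sum.inr_ne_inl hh
                    · obtain ⟨i, -, rfl⟩ := List.mem_map.mp h4
                      rw [realize_neF]
                      exact fun hh => Sum.inr_ne_inl hh
                  · obtain ⟨k', -, rfl⟩ := List.mem_map.mp h'''
                    rw [realize_incF]
                    exact Or.inl ⟨k', rfl⟩
                · obtain ⟨j, -, rfl⟩ := List.mem_map.mp h''
                  rw [realize_incF]
                  exact Or.inr ⟨j, rfl⟩⟩
            rw [BoundedFormula.realize_foldr_inf] at hws2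
            have hq1 : ptL (ws2 0) := by
              have hthis := hws2 _ (List.mem_append.mpr (Or.inl (List.mem_append.mpr (Or.inl
                (List.mem_append.mpr (Or.inl (List.mem_append.mpr (Or.inl
                  (List.mem_singleton.mpr rfl)))))))))
              rw [realize_ptF] at hthis
              exact hthis
            have hq2 : ∀ i, ws2 0 ≠ c i := by
              intro i
              have hthis := hws2 _ (List.mem_append.mpr (Or.inl (List.mem_append.mpr (Or.inl
                (List.mem_append.mpr (Or.inl (List.mem_append.mpr (Or.inr
                  (List.mem_map.mpr ⟨i, List.mem_finRange i, rfl⟩)))))))))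
              rw [realize_neF] at hthis
              exact hthis
            have hq3 : ∀ i : Fin jz, ws2 0 ≠ (z i : M) := by
              intro i
              have hthis := hws2 _ (List.mem_append.mpr (Or.inl (List.mem_append.mpr (Or.inl
                (List.mem_append.mpr (Or.inr (List.mem_map.mpr ⟨i, List.mem_finRange i, rfl⟩)))))))
              rw [realize_neF] at hthis
              exact hthis
            have hq4 : ∀ k', incL (ws2 0) ((ℓ k' : M)) := by
              intro k'
              have hthis := hws2 _ (List.mem_append.mpr (Or.inl (List.mem_append.mpr (Or.inr
                (List.mem_map.mpr ⟨k', List.mem_finRange k', rfl⟩)))))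
              rw [realize_incF] at hthis
              exact hthis
            have hq5 : ∀ j, incL (ws2 0) (d j) := by
              intro j
              have hthis := hws2 _ (List.mem_append.mpr (Or.inr
                (List.mem_map.mpr ⟨j, List.mem_finRange j, rfl⟩)))
              rw [realize_incF] at hthis
              exact hthis
            have hqpred : pred (ws2 0) := Or.inl ⟨hq1, hq2, hq5⟩
            obtain ⟨z', hz'i, hz'c, hz'l⟩ := snoc_tuple z hzi ⟨ws2 0, hqpred⟩
              (fun i hh => (hq3 i) (congrArg Subtype.val hh))
            refine ⟨z', hz'i, ?_⟩
            intro i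
            rcases Fin.eq_castSucc_or_eq_last i with ⟨i', rfl⟩ | rfl
            · rw [hz'c i']
              exact hz i'
            · rw [hz'l]
              exact ⟨hq1, hq4⟩
        obtain ⟨z, hzi, hz⟩ := pump m₀
        apply hN'free
        exact ⟨fun i => f (z i), fun k' => f (ℓ k'),
          fun i j h => hzi (f.injective h), fun i j h => hℓi (f.injective h),
          fun i => (emb_pt f _).mpr ((sub_pt _).mpr (hz i).1),
          fun k' => (emb_ln f _).mpr ((sub_ln _).mpr (hℓl k')),
          fun i k' => (emb_inc f _ _).mpr ((sub_inc _ _).mpr ((hz i).2 k'))⟩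
    have key_ln : ∀ xx : Fin m₀ → Subtype pred, Function.Injective xx →
        (∀ i', ptL ((xx i' : M))) → ∀ y : N', lnL y → y ∉ Set.range f →
        (∀ i', incL (f (xx i')) y) → False := by
      intro xx hxxi hxxp y hyl hynr hyinc
      have hxxv : Function.Injective fun i' => (xx i' : M) := fun i j h => hxxi (Subtype.ext h)
      have hxxc : ∀ i' i, (xx i' : M) ≠ c i := fun i' => (npc _ (xx i').2 (hxxp i')).1
      by_cases hbl : ∃ w : Fin (n - 1) → M, Function.Injective w ∧ ∀ j,
          lnL (w j) ∧ (∀ i', incL ((xx i' : M)) (w j)) ∧ ∀ i, incL (c i) (w j)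
      · obtain ⟨w, hwi, hw⟩ := hbl
        obtain ⟨e, hei, he⟩ := count_tuple (k := n₀ - 1) w hwi (fun j => pred (w j)) d
          (fun j hnp => by
            by_contra hno
            push_neg at hno
            exact hnp (Or.inr ⟨(hw j).1, hno, (hw j).2.2⟩)) (by omega)
        have hBp : ∀ j : Fin n₀, ∃ p : N',
            ((∃ hj : (j : ℕ) < n₀ - 1, p = f ⟨w (e ⟨j, hj⟩), he ⟨j, hj⟩⟩) ∨
              (¬(j : ℕ) < n₀ - 1 ∧ p = y)) ∧ lnL p ∧ ∀ i', incL (f (xx i')) p := by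
          intro j
          by_cases hj : (j : ℕ) < n₀ - 1
          · refine ⟨f ⟨w (e ⟨j, hj⟩), he ⟨j, hj⟩⟩, Or.inl ⟨hj, rfl⟩, ?_, ?_⟩
            · exact (emb_ln f _).mpr ((sub_ln _).mpr (hw (e ⟨j, hj⟩)).1)
            · intro i'
              exact (emb_inc f _ _).mpr ((sub_inc _ _).mpr ((hw (e ⟨j, hj⟩)).2.1 i'))
          · exact ⟨y, Or.inr ⟨hj, rfl⟩, hyl, hyinc⟩
        choose B hB1 hB2 hB3 using hBp
        apply hN'free
        refine ⟨fun i' => f (xx i'), B, fun i j h => hxxi (f.injective h), ?_,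
          fun i' => (emb_pt f _).mpr ((sub_pt _).mpr (hxxp i')), hB2, fun i' j => hB3 j i'⟩
        intro i j hij
        rcases hB1 i with ⟨hi, hpi⟩ | ⟨hi, hpi⟩ <;> rcases hB1 j with ⟨hj, hpj⟩ | ⟨hj, hpj⟩
        · rw [hpi, hpj] at hij
          have h6 := hei (hwi (congrArg Subtype.val (f.injective hij)))
          rw [Fin.mk.injEq] at h6
          exact Fin.ext h6
        · rw [hpi, hpj] at hij
          exact absurd ⟨_, hij⟩ hynr
        · rw [hpi, hpj] at hij
          exact absurd ⟨_, hij.symm⟩ hynr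
        · have h1 := i.isLt
          have h2 := j.isLt
          exact Fin.ext (by omega)
      · -- pump: arbitrarily many distinct pred lines through the points xx
        have pump : ∀ jz : ℕ, ∃ z : Fin jz → Subtype pred, Function.Injective z ∧
            ∀ i, lnL ((z i : M)) ∧ ∀ i', incL ((xx i' : M)) ((z i : M)) := by
          intro jz
          induction jz with
          | zero => exact ⟨Fin.elim0, fun i => i.elim0, fun i => i.elim0⟩
          | succ jz ih =>
            obtain ⟨z, hzi, hz⟩ := ih
            letI SE : IncLang.Structure (M ⊕ PUnit.{u+1}) :=
              mkS (Sum.elim (fun x => ptL x) fun _ => False)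
                (Sum.elim (fun x => lnL x) fun _ => True)
                (fun zz ww =>
                  Sum.elim (fun x => Sum.elim (fun x' => incL x x')
                      (fun _ => (∃ i', x = (xx i' : M)) ∨ ∃ i, x = c i) ww)
                    (fun _ => Sum.elim (fun _ => False) (fun _ => False) ww) zz)
            have hEinc : IsIncidenceL (M ⊕ PUnit.{u+1}) := by
              refine ⟨?_, ?_, ?_⟩
              · intro zz
                cases zz with
                | inl x => exact hMinc.1 x
                | inr uu => exact Or.inr trivial
              · intro zz
                cases zz with
                | inl x => exact hnotboth x
                | inr uu => exact fun h => h.1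
              · intro zz ww h
                cases zz with
                | inl x =>
                  cases ww with
                  | inl x' => exact hMinc.2.2 x x' h
                  | inr uu =>
                    have h' : (∃ i', x = (xx i' : M)) ∨ ∃ i, x = c i := h
                    refine ⟨?_, trivial⟩
                    rcases h' with ⟨i', rfl⟩ | ⟨i, rfl⟩
                    · exact hxxp i'
                    · exact hcp i
                | inr uu =>
                  cases ww with
                  | inl x' => exact absurd h (fun hh => hh)
                  | inr uu' => exact absurd h (fun hh => hh)
            have hEfree : KFreeL m n (M ⊕ PUnit.{u+1}) := by
              rintro ⟨aa, bb, hai, hbi, hap, hbl', hab'⟩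
              have haex : ∀ i, ∃ x, aa i = Sum.inl x := by
                intro i
                cases hai' : aa i with
                | inl x => exact ⟨x, rfl⟩
                | inr uu =>
                  have hthis := hap i
                  rw [hai'] at hthis
                  exact absurd hthis (fun hh => hh)
              obtain ⟨pa, hpa⟩ := extract_inl aa haex
              have hpai : Function.Injective pa := by
                intro i j h
                apply hai
                rw [hpa i, hpa j, h]
              by_cases hnew : ∃ j uu, bb j = Sum.inr uu
              · obtain ⟨j₀, uu₀, hj₀⟩ := hnew
                have haT : ∀ i, (∃ i', pa i = (xx i' : M)) ∨ ∃ ic, pa i = c ic := by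
                  intro i
                  have h := hab' i j₀
                  rw [hpa i, hj₀] at h
                  exact h
                have hTcard : ((Finset.univ.image fun i' => ((xx i' : M))) ∪
                    Finset.univ.image c).card = m := by
                  rw [Finset.card_union_of_disjoint, Finset.card_image_of_injective _ hxxv,
                    Finset.card_image_of_injective _ hc, Finset.card_univ, Finset.card_univ]
                  · simp only [Fintype.card_fin]
                    omega
                  · rw [Finset.disjoint_left]
                    rintro x hx hx'
                    obtain ⟨i', -, rfl⟩ := Finset.mem_image.mp hx
                    obtain ⟨ic, -, hic⟩ := Finset.mem_image.mp hx'
                    exact hxxc i' ic hic.symm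
                have hcov := cover_tuple pa hpai _ (fun i => by
                    rcases haT i with ⟨i', h⟩ | ⟨ic, h⟩
                    · exact Finset.mem_union_left _
                        (Finset.mem_image.mpr ⟨i', Finset.mem_univ _, h.symm⟩)
                    · exact Finset.mem_union_right _
                        (Finset.mem_image.mpr ⟨ic, Finset.mem_univ _, h.symm⟩))
                  (le_of_eq hTcard)
                obtain ⟨e2, he2i, he2⟩ := count_tuple (k := n - 1) bb hbi
                  (fun j => ∃ x, bb j = Sum.inl x)
                  (fun _ : Fin 1 => (Sum.inr PUnit.unit : M ⊕ PUnit.{u+1}))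
                  (fun j hnj => by
                    cases hbj' : bb j with
                    | inl x => exact absurd ⟨x, hbj'⟩ hnj
                    | inr uu => exact ⟨0, rfl⟩)
                  (by omega)
                choose w hw using he2
                apply hbl
                refine ⟨w, fun i j h => he2i (hbi (by rw [hw i, hw j, h])), ?_⟩
                intro j
                refine ⟨?_, ?_, ?_⟩
                · have hthis := hbl' (e2 j)
                  rw [hw j] at hthis
                  exact hthis
                · intro i'
                  obtain ⟨i, hi⟩ := hcov ((xx i' : M)) (Finset.mem_union_left _
                    (Finset.mem_image.mpr ⟨i', Finset.mem_univ _, rfl⟩))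
                  have h := hab' i (e2 j)
                  rw [hpa i, hw j, hi] at h
                  exact h
                · intro ic
                  obtain ⟨i, hi⟩ := hcov (c ic) (Finset.mem_union_right _
                    (Finset.mem_image.mpr ⟨ic, Finset.mem_univ _, rfl⟩))
                  have h := hab' i (e2 j)
                  rw [hpa i, hw j, hi] at h
                  exact h
              · push_neg at hnew
                have hbex : ∀ j, ∃ x, bb j = Sum.inl x := by
                  intro j
                  cases hbj' : bb j with
                  | inl x => exact ⟨x, rfl⟩
                  | inr uu => exact absurd hbj' (hnew j uu)
                obtain ⟨lb, hlb⟩ := extract_inl bb hbex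
                apply hMfree
                refine ⟨pa, lb, hpai, fun i j h => hbi (by rw [hlb i, hlb j, h]), ?_, ?_, ?_⟩
                · intro i
                  have hthis := hap i
                  rw [hpa i] at hthis
                  exact hthis
                · intro j
                  have hthis := hbl' j
                  rw [hlb j] at hthis
                  exact hthis
                · intro i j
                  have hthis := hab' i j
                  rw [hpa i, hlb j] at hthis
                  exact hthis
            obtain ⟨ws2, hws2⟩ := hMec _ hEinc hEfree
              (mkEmb Sum.inl (fun _ _ h => Sum.inl.inj h) (fun _ => Iff.rfl) (fun _ => Iff.rfl)
                (fun _ _ => Iff.rfl)) 1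
              (List.foldr (· ⊓ ·) ⊤
                ([lnF (Term.var (Sum.inr 0))]
                ++ ((List.finRange (n - n₀)).map fun j =>
                      neF (Term.var (Sum.inr 0)) (Term.var (Sum.inl (d j))))
                ++ ((List.finRange jz).map fun i =>
                      neF (Term.var (Sum.inr 0)) (Term.var (Sum.inl ((z i : M)))))
                ++ ((List.finRange m₀).map fun i' =>
                      incF (Term.var (Sum.inl ((xx i' : M)))) (Term.var (Sum.inr 0)))
                ++ ((List.finRange (m - m₀)).map fun i =>
                      incF (Term.var (Sum.inl (c i))) (Term.var (Sum.inr 0)))))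
              (isQF_foldr_inf _ (by
                intro φ'' hφ''
                rcases List.mem_append.mp hφ'' with h'' | h''
                · rcases List.mem_append.mp h'' with h''' | h'''
                  · rcases List.mem_append.mp h''' with h4 | h4
                    · rcases List.mem_append.mp h4 with h5 | h5
                      · rw [List.mem_singleton.mp h5]
                        exact isQF_lnF
                      · obtain ⟨_, -, rfl⟩ := List.mem_map.mp h5
                        exact isQF_neF
                    · obtain ⟨_, -, rfl⟩ := List.mem_map.mp h4
                      exact isQF_neF
                  · obtain ⟨_, -, rfl⟩ := List.mem_map.mp h'''
                    exact isQF_incF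
                · obtain ⟨_, -, rfl⟩ := List.mem_map.mp h''
                  exact isQF_incF))
              ⟨fun _ => Sum.inr PUnit.unit, by
                rw [BoundedFormula.realize_foldr_inf]
                intro φ'' hφ''
                rcases List.mem_append.mp hφ'' with h'' | h''
                · rcases List.mem_append.mp h'' with h''' | h'''
                  · rcases List.mem_append.mp h''' with h4 | h4
                    · rcases List.mem_append.mp h4 with h5 | h5
                      · rw [List.mem_singleton.mp h5, realize_lnF]
                        exact trivial
                      · obtain ⟨j, -, rfl⟩ := List.mem_map.mp h5
                        rw [realize_neF]
                        exact fun hh => Sum.inr_ne_inl hh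
                    · obtain ⟨i, -, rfl⟩ := List.mem_map.mp h4
                      rw [realize_neF]
                      exact fun hh => Sum.inr_ne_inl hh
                  · obtain ⟨i', -, rfl⟩ := List.mem_map.mp h'''
                    rw [realize_incF]
                    exact Or.inl ⟨i', rfl⟩
                · obtain ⟨i, -, rfl⟩ := List.mem_map.mp h''
                  rw [realize_incF]
                  exact Or.inr ⟨i, rfl⟩⟩
            rw [BoundedFormula.realize_foldr_inf] at hws2
            have hq1 : lnL (ws2 0) := by
              have hthis := hws2 _ (List.mem_append.mpr (Or.inl (List.mem_append.mpr (Or.inl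
                (List.mem_append.mpr (Or.inl (List.mem_append.mpr (Or.inl
                  (List.mem_singleton.mpr rfl)))))))))
              rw [realize_lnF] at hthis
              exact hthis
            have hq2 : ∀ j, ws2 0 ≠ d j := by
              intro j
              have hthis := hws2 _ (List.mem_append.mpr (Or.inl (List.mem_append.mpr (Or.inl
                (List.mem_append.mpr (Or.inl (List.mem_append.mpr (Or.inr
                  (List.mem_map.mpr ⟨j, List.mem_finRange j, rfl⟩)))))))))
              rw [realize_neF] at hthis
              exact hthis
            have hq3 : ∀ i : Fin jz, ws2 0 ≠ (z i : M) := by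
              intro i
              have hthis := hws2 _ (List.mem_append.mpr (Or.inl (List.mem_append.mpr (Or.inl
                (List.mem_append.mpr (Or.inr (List.mem_map.mpr ⟨i, List.mem_finRange i, rfl⟩)))))))
              rw [realize_neF] at hthis
              exact hthis
            have hq4 : ∀ i', incL ((xx i' : M)) (ws2 0) := by
              intro i'
              have hthis := hws2 _ (List.mem_append.mpr (Or.inl (List.mem_append.mpr (Or.inr
                (List.mem_map.mpr ⟨i', List.mem_finRange i', rfl⟩)))))
              rw [realize_incF] at hthis
              exact hthis
            have hq5 : ∀ i, incL (c i) (ws2 0) := by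
              intro i
              have hthis := hws2 _ (List.mem_append.mpr (Or.inr
                (List.mem_map.mpr ⟨i, List.mem_finRange i, rfl⟩)))
              rw [realize_incF] at hthis
              exact hthis
            have hqpred : pred (ws2 0) := Or.inr ⟨hq1, hq2, hq5⟩
            obtain ⟨z', hz'i, hz'c, hz'l⟩ := snoc_tuple z hzi ⟨ws2 0, hqpred⟩
              (fun i hh => (hq3 i) (congrArg Subtype.val hh))
            refine ⟨z', hz'i, ?_⟩
            intro i
            rcases Fin.eq_castSucc_or_eq_last i with ⟨i', rfl⟩ | rfl
            · rw [hz'c i']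
              exact hz i'
            · rw [hz'l]
              exact ⟨hq1, hq4⟩
        obtain ⟨z, hzi, hz⟩ := pump n₀
        apply hN'free
        exact ⟨fun i' => f (xx i'), fun j => f (z j),
          fun i j h => hxxi (f.injective h), fun i j h => hzi (f.injective h),
          fun i' => (emb_pt f _).mpr ((sub_pt _).mpr (hxxp i')),
          fun j => (emb_ln f _).mpr ((sub_ln _).mpr (hz j).1),
          fun i' j => (emb_inc f _ _).mpr ((sub_inc _ _).mpr ((hz j).2 i'))⟩
    -- ===== K_{m,n}-freeness of the amalgam =====
    have hNNfree : KFreeL m n (M ⊕ {y : N' // y ∉ Set.range f}) := by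
      rintro ⟨a, b, hainj, hbinj, hapt, hbln, hab⟩
      by_cases hnp : ∃ i y, a i = Sum.inr y
      · obtain ⟨i₀, y₀, hi₀⟩ := hnp
        by_cases hnl : ∃ j w, b j = Sum.inr w
        · -- new point and new line: everything relevant lies in N'
          obtain ⟨j₀, w₀, hj₀⟩ := hnl
          have kpt : ∀ i, ¬(∃ p : N', hEmb p = a i) → ∃ jc, a i = Sum.inl (c jc) := by
            intro i hnp'
            cases hai : a i with
            | inr yy =>
              exact absurd ⟨yy.1, by rw [hai, hEmb_new yy.1 yy.2]⟩ hnp'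
            | inl x =>
              have h := hab i j₀
              rw [hai, hj₀] at h
              have h' : (∃ hx : pred x, incL (f ⟨x, hx⟩) w₀.1) ∨
                  ((∃ jc, x = c jc) ∧ lnL w₀.1) := h
              rcases h' with ⟨hx, -⟩ | ⟨⟨jc, rfl⟩, -⟩
              · exact absurd ⟨f ⟨x, hx⟩, by rw [hai, hEmb_f]⟩ hnp'
              · exact ⟨jc, rfl⟩
          have klin : ∀ j, ¬(∃ p : N', hEmb p = b j) → ∃ jd, b j = Sum.inl (d jd) := by
            intro j hnp'
            cases hbj : b j with
            | inr yy =>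
              exact absurd ⟨yy.1, by rw [hbj, hEmb_new yy.1 yy.2]⟩ hnp'
            | inl x =>
              have h := hab i₀ j
              rw [hi₀, hbj] at h
              have h' : (∃ hx : pred x, incL y₀.1 (f ⟨x, hx⟩)) ∨
                  ((∃ jd, x = d jd) ∧ ptL y₀.1) := h
              rcases h' with ⟨hx, -⟩ | ⟨⟨jd, rfl⟩, -⟩
              · exact absurd ⟨f ⟨x, hx⟩, by rw [hbj, hEmb_f]⟩ hnp'
              · exact ⟨jd, rfl⟩
          obtain ⟨e, hei, he⟩ := count_tuple (k := m₀) a hainj (fun i => ∃ p : N', hEmb p = a i)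
            (fun jc => Sum.inl (c jc)) (fun i h => kpt i h) (by omega)
          choose A hA using he
          obtain ⟨e', he'i, he'⟩ := count_tuple (k := n₀) b hbinj
            (fun j => ∃ p : N', hEmb p = b j)
            (fun jd => Sum.inl (d jd)) (fun j h => klin j h) (by omega)
          choose B hB using he'
          apply hN'free
          refine ⟨A, B, ?_, ?_, ?_, ?_, ?_⟩
          · intro i j h
            exact hei (hainj (by rw [← hA i, ← hA j, h]))
          · intro i j h
            exact he'i (hbinj (by rw [← hB i, ← hB j, h]))
          · intro i
            have hthis := hapt (e i)
            rw [← hA i] at hthis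
            exact (emb_pt hEmb _).mp hthis
          · intro j
            have hthis := hbln (e' j)
            rw [← hB j] at hthis
            exact (emb_ln hEmb _).mp hthis
          · intro i j
            have hthis := hab (e i) (e' j)
            rw [← hA i, ← hB j] at hthis
            exact (emb_inc hEmb _ _).mp hthis
        · -- new point, all lines old
          push_neg at hnl
          have hbex : ∀ j, ∃ x, b j = Sum.inl x := by
            intro j
            cases hbj : b j with
            | inl x => exact ⟨x, rfl⟩
            | inr yy => exact absurd hbj (hnl j yy)
          obtain ⟨lb, hlb⟩ := extract_inl b hbex
          have hlbi : Function.Injective lb := fun i j h => hbinj (by rw [hlb i, hlb j, h])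
          have hbT : ∀ j, (∃ hx : pred (lb j), incL y₀.1 (f ⟨lb j, hx⟩)) ∨
              ∃ jd, lb j = d jd := by
            intro j
            have h := hab i₀ j
            rw [hi₀, hlb j] at h
            have h' : (∃ hx : pred (lb j), incL y₀.1 (f ⟨lb j, hx⟩)) ∨
                ((∃ jd, lb j = d jd) ∧ ptL y₀.1) := h
            rcases h' with h'' | ⟨h'', -⟩
            · exact Or.inl h''
            · exact Or.inr h''
          obtain ⟨e, hei, he⟩ := count_tuple (k := n₀) lb hlbi
            (fun j => ∃ hx : pred (lb j), incL y₀.1 (f ⟨lb j, hx⟩)) d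
            (fun j h => by
              rcases hbT j with h'' | h''
              · exact absurd h'' h
              · exact h'') (by omega)
          choose hp hinc using he
          apply key_pt (fun k' => ⟨lb (e k'), hp k'⟩)
            (fun i j h => hei (hlbi (congrArg Subtype.val h)))
            (fun k' => by
              have hthis := hbln (e k')
              rw [hlb (e k')] at hthis
              exact hthis)
            y₀.1
            (by
              have hthis := hapt i₀
              rw [hi₀] at hthis
              exact hthis)
            y₀.2 hinc
      · push_neg at hnp
        have haex : ∀ i, ∃ x, a i = Sum.inl x := by
          intro i
          cases hai : a i with
          | inl x => exact ⟨x, rfl⟩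
          | inr yy => exact absurd hai (hnp i yy)
        obtain ⟨pa, hpa⟩ := extract_inl a haex
        have hpai : Function.Injective pa := fun i j h => hainj (by rw [hpa i, hpa j, h])
        by_cases hnl : ∃ j w, b j = Sum.inr w
        · -- new line, all points old
          obtain ⟨j₀, w₀, hj₀⟩ := hnl
          have haT : ∀ i, (∃ hx : pred (pa i), incL (f ⟨pa i, hx⟩) w₀.1) ∨
              ∃ jc, pa i = c jc := by
            intro i
            have h := hab i j₀
            rw [hpa i, hj₀] at h
            have h' : (∃ hx : pred (pa i), incL (f ⟨pa i, hx⟩) w₀.1) ∨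
                ((∃ jc, pa i = c jc) ∧ lnL w₀.1) := h
            rcases h' with h'' | ⟨h'', -⟩
            · exact Or.inl h''
            · exact Or.inr h''
          obtain ⟨e, hei, he⟩ := count_tuple (k := m₀) pa hpai
            (fun i => ∃ hx : pred (pa i), incL (f ⟨pa i, hx⟩) w₀.1) c
            (fun i h => by
              rcases haT i with h'' | h''
              · exact absurd h'' h
              · exact h'') (by omega)
          choose hp hinc using he
          apply key_ln (fun i' => ⟨pa (e i'), hp i'⟩)
            (fun i j h => hei (hpai (congrArg Subtype.val h)))
            (fun i' => by
              have hthis := hapt (e i')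
              rw [hpa (e i')] at hthis
              exact hthis)
            w₀.1
            (by
              have hthis := hbln j₀
              rw [hj₀] at hthis
              exact hthis)
            w₀.2 hinc
        · -- everything old: contradiction with K-freeness of M
          push_neg at hnl
          have hbex : ∀ j, ∃ x, b j = Sum.inl x := by
            intro j
            cases hbj : b j with
            | inl x => exact ⟨x, rfl⟩
            | inr yy => exact absurd hbj (hnl j yy)
          obtain ⟨lb, hlb⟩ := extract_inl b hbex
          apply hMfree
          refine ⟨pa, lb, hpai, fun i j h => hbinj (by rw [hlb i, hlb j, h]), ?_, ?_, ?_⟩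
          · intro i
            have hthis := hapt i
            rw [hpa i] at hthis
            exact hthis
          · intro j
            have hthis := hbln j
            rw [hlb j] at hthis
            exact hthis
          · intro i j
            have hthis := hab i j
            rw [hpa i, hlb j] at hthis
            exact hthis
    -- ===== transfer of the existential formula =====
    obtain ⟨ws, hws⟩ := hMec _ hNNinc hNNfree g k
      (((φ.relabel (Sum.inl ∘ (Subtype.val : Subtype pred → M) : Subtype pred → M ⊕ Fin 0)).castLE
          (by omega : 0 + k ≤ k)) ⊓
        (List.foldr (· ⊓ ·) ⊤ ((List.finRange k).map fun i =>
          (List.foldr (· ⊓ ·) ⊤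
            ([ptF (Term.var (Sum.inr i))]
            ++ ((List.finRange (m - m₀)).map fun jc =>
                  neF (Term.var (Sum.inr i)) (Term.var (Sum.inl (c jc))))
            ++ ((List.finRange (n - n₀)).map fun jd =>
                  incF (Term.var (Sum.inr i)) (Term.var (Sum.inl (d jd)))))) ⊔
          (List.foldr (· ⊓ ·) ⊤
            ([lnF (Term.var (Sum.inr i))]
            ++ ((List.finRange (n - n₀)).map fun jd =>
                  neF (Term.var (Sum.inr i)) (Term.var (Sum.inl (d jd))))
            ++ ((List.finRange (m - m₀)).map fun jc =>
                  incF (Term.var (Sum.inl (c jc))) (Term.var (Sum.inr i))))))))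
      (by
        refine ((hφQF.relabel _).castLE).inf (isQF_foldr_inf _ ?_)
        intro ψ' hψ'
        obtain ⟨i, -, rfl⟩ := List.mem_map.mp hψ'
        refine (isQF_foldr_inf _ ?_).sup (isQF_foldr_inf _ ?_) <;>
        · intro φ'' hφ''
          rcases List.mem_append.mp hφ'' with h'' | h''
          · rcases List.mem_append.mp h'' with h''' | h'''
            · rw [List.mem_singleton.mp h''']
              first
                | exact isQF_ptF
                | exact isQF_lnF
            · obtain ⟨jc, -, rfl⟩ := List.mem_map.mp h'''
              exact isQF_neF
          · obtain ⟨jd, -, rfl⟩ := List.mem_map.mp h''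
            exact isQF_incF)
      ⟨⇑hEmb ∘ xs0, by
        rw [BoundedFormula.realize_inf]
        constructor
        · rw [realize_relabel_inl]
          have h := (hφQF.realize_embedding hEmb (v := ⇑f) (xs := xs0)).mpr hxs0
          have hfun : ((⇑g) ∘ (Subtype.val : Subtype pred → M)) = ⇑hEmb ∘ ⇑f := by
            funext zz
            exact (hEmb_f zz).symm
          rw [hfun]
          exact h
        · rw [BoundedFormula.realize_foldr_inf]
          intro φ' hφ'
          obtain ⟨i, -, rfl⟩ := List.mem_map.mp hφ'
          rw [BoundedFormula.realize_sup]
          rcases hN'inc.1 (xs0 i) with hpt' | hln'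
          · left
            rw [BoundedFormula.realize_foldr_inf]
            intro φ'' hφ''
            rcases List.mem_append.mp hφ'' with h'' | h''
            · rcases List.mem_append.mp h'' with h''' | h'''
              · rw [List.mem_singleton.mp h''', realize_ptF]
                exact (emb_pt hEmb (xs0 i)).mpr hpt'
              · obtain ⟨jc, -, rfl⟩ := List.mem_map.mp h'''
                rw [realize_neF]
                show hEmb (xs0 i) ≠ Sum.inl (c jc)
                by_cases hr : xs0 i ∈ Set.range f
                · obtain ⟨zz, heqz⟩ := hr
                  rw [← heqz, hEmb_f zz]
                  intro heq
                  exact predne_c zz jc (Sum.inl.inj heq)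
                · rw [hEmb_new _ hr]
                  exact fun hh => Sum.inr_ne_inl hh
            · obtain ⟨jd, -, rfl⟩ := List.mem_map.mp h''
              rw [realize_incF]
              show incL (hEmb (xs0 i)) (Sum.inl (d jd))
              by_cases hr : xs0 i ∈ Set.range f
              · obtain ⟨zz, heqz⟩ := hr
                rw [← heqz, hEmb_f zz]
                have hptz : ptL (zz : M) :=
                  (sub_pt zz).mp ((emb_pt f zz).mp (heqz ▸ hpt'))
                exact (npc _ zz.2 hptz).2 jd
              · rw [hEmb_new _ hr]
                exact Or.inr ⟨⟨jd, rfl⟩, hpt'⟩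
          · right
            rw [BoundedFormula.realize_foldr_inf]
            intro φ'' hφ''
            rcases List.mem_append.mp hφ'' with h'' | h''
            · rcases List.mem_append.mp h'' with h''' | h'''
              · rw [List.mem_singleton.mp h''', realize_lnF]
                exact (emb_ln hEmb (xs0 i)).mpr hln'
              · obtain ⟨jd, -, rfl⟩ := List.mem_map.mp h'''
                rw [realize_neF]
                show hEmb (xs0 i) ≠ Sum.inl (d jd)
                by_cases hr : xs0 i ∈ Set.range f
                · obtain ⟨zz, heqz⟩ := hr
                  rw [← heqz, hEmb_f zz]
                  intro heq
                  exact predne_d zz jd (Sum.inl.inj heq)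
                · rw [hEmb_new _ hr]
                  exact fun hh => Sum.inr_ne_inl hh
            · obtain ⟨jc, -, rfl⟩ := List.mem_map.mp h''
              rw [realize_incF]
              show incL (Sum.inl (c jc)) (hEmb (xs0 i))
              by_cases hr : xs0 i ∈ Set.range f
              · obtain ⟨zz, heqz⟩ := hr
                rw [← heqz, hEmb_f zz]
                have hlnz : lnL (zz : M) :=
                  (sub_ln zz).mp ((emb_ln f zz).mp (heqz ▸ hln'))
                exact (nld _ zz.2 hlnz).2 jc
              · rw [hEmb_new _ hr]
                exact Or.inr ⟨⟨jc, rfl⟩, hln'⟩⟩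
    rw [BoundedFormula.realize_inf] at hws
    obtain ⟨hws1, hws2⟩ := hws
    rw [realize_relabel_inl] at hws1
    rw [BoundedFormula.realize_foldr_inf] at hws2
    have hpredws : ∀ i, pred (ws i) := by
      intro i
      have h := hws2 _ (List.mem_map.mpr ⟨i, List.mem_finRange i, rfl⟩)
      rw [BoundedFormula.realize_sup] at h
      rcases h with h | h
      · rw [BoundedFormula.realize_foldr_inf] at h
        refine Or.inl ⟨?_, ?_, ?_⟩
        · have := h _ (List.mem_append.mpr (Or.inl (List.mem_append.mpr (Or.inl
            (List.mem_singleton.mpr rfl)))))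
          rw [realize_ptF] at this
          exact this
        · intro jc
          have := h _ (List.mem_append.mpr (Or.inl (List.mem_append.mpr (Or.inr
            (List.mem_map.mpr ⟨jc, List.mem_finRange jc, rfl⟩)))))
          rw [realize_neF] at this
          exact this
        · intro jd
          have := h _ (List.mem_append.mpr (Or.inr
            (List.mem_map.mpr ⟨jd, List.mem_finRange jd, rfl⟩)))
          rw [realize_incF] at this
          exact this
      · rw [BoundedFormula.realize_foldr_inf] at h
        refine Or.inr ⟨?_, ?_, ?_⟩
        · have := h _ (List.mem_append.mpr (Or.inl (List.mem_append.mpr (Or.inl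
            (List.mem_singleton.mpr rfl)))))
          rw [realize_lnF] at this
          exact this
        · intro jd
          have := h _ (List.mem_append.mpr (Or.inl (List.mem_append.mpr (Or.inr
            (List.mem_map.mpr ⟨jd, List.mem_finRange jd, rfl⟩)))))
          rw [realize_neF] at this
          exact this
        · intro jc
          have := h _ (List.mem_append.mpr (Or.inr
            (List.mem_map.mpr ⟨jc, List.mem_finRange jc, rfl⟩)))
          rw [realize_incF] at this
          exact this
    refine ⟨fun i => ⟨ws i, hpredws i⟩, ?_⟩
    have hfin := (hφQF.realize_embedding
      (mkEmb (Subtype.val : Subtype pred → M) Subtype.val_injective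
        (fun x => (sub_pt x).symm) (fun x => (sub_ln x).symm)
        (fun x y => (sub_inc x y).symm))
      (v := (id : Subtype pred → Subtype pred)) (xs := fun i => ⟨ws i, hpredws i⟩))
    exact hfin.mp hws1
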